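/- Let L be a sequence of vertex flips on K_n with s(L) < n and not revisiting any state. Partition L into maximal blocks of singletons (vertices appearing exactly once in L) and maximal transition blocks T₁,...,T_k (of repeated vertices). Then rank(A_L) ≥ s₁(L) + ∑_i s(T_i) = s(L) + ∑_v (b(v) - 1)⁺, where b(v) is the number of transition blocks containing v and s₁(L) the number of singletons. -/

import Mathlib

open Matrix

/-- Flip the spin of vertex `v`. -/
def flipSpin {n : ℕ} (v : Fin n) (σ : Fin n → ℝ) : Fin n → ℝ :=
  fun u => if u = v then -σ u else σ u

/-- The spin configuration obtained from `σ₀` by flipping the vertices of `L` in order. -/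
def evolve {n : ℕ} (σ₀ : Fin n → ℝ) : List (Fin n) → (Fin n → ℝ)
  | [] => σ₀
  | v :: L => evolve (flipSpin v σ₀) L

/-- A spin configuration takes values in `{-1, 1}`. -/
def isSpin {n : ℕ} (σ : Fin n → ℝ) : Prop := ∀ v, σ v = 1 ∨ σ v = -1

/-- The move matrix of a flip sequence `L` from initial configuration `σ₀` on the complete
graph: the `t`-th column is the vector `α_t` of coefficients of the change of the
Hamiltonian at step `t`, i.e. `(α_t)_{u v_t} = σ_{t-1}(v_t) σ_{t-1}(u)` for `u ≠ v_t` and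
`(α_t)_e = 0` for edges `e` not incident to `v_t`.  (Rows are indexed by ordered pairs;
each edge appears as two equal rows, which does not affect the rank.) -/
def moveMatrix {n : ℕ} (σ₀ : Fin n → ℝ) (L : List (Fin n)) :
    Matrix (Fin n × Fin n) (Fin L.length) ℝ :=
  fun e t =>
    if e.1 = L.get t ∧ e.2 ≠ L.get t then
      evolve σ₀ (L.take t.1) (L.get t) * evolve σ₀ (L.take t.1) e.2
    else if e.2 = L.get t ∧ e.1 ≠ L.get t then
      evolve σ₀ (L.take t.1) (L.get t) * evolve σ₀ (L.take t.1) e.1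
    else 0

/-- `s(L)`: the number of distinct vertices appearing in `L`. -/
def sDist {n : ℕ} (L : List (Fin n)) : ℕ := L.toFinset.card

/-- `s₂(L)`: the number of repeated vertices (appearing at least twice) in `L`. -/
def sRep {n : ℕ} (L : List (Fin n)) : ℕ :=
  (L.toFinset.filter fun v => 2 ≤ L.count v).card

/-- `s₁(L)`: the number of singletons (vertices appearing exactly once) in `L`. -/
def sSing {n : ℕ} (L : List (Fin n)) : ℕ :=
  (L.toFinset.filter fun v => L.count v = 1).card

/-- The block `L[i+1, j]` (0-indexed: positions `i, …, j-1`). -/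
def seg {n : ℕ} (L : List (Fin n)) (i j : ℕ) : List (Fin n) := (L.take j).drop i

/-- `L` does not revisit any state: no (nonempty) contiguous block of `L` contains every
vertex an even number of times. -/
def noRevisit {n : ℕ} (L : List (Fin n)) : Prop :=
  ∀ i j : ℕ, i < j → j ≤ L.length → ∃ v, ¬ Even ((seg L i j).count v)

/-- A vertex is a repeated vertex of `L` if it appears at least twice. -/
def isRepV {n : ℕ} (L : List (Fin n)) (v : Fin n) : Prop := 2 ≤ L.count v

/-- `TransBlock L i j`: the block of positions `i, …, j-1` is a transition block of `L`,
i.e. a maximal contiguous segment consisting only of repeated vertices. -/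
def TransBlock {n : ℕ} (L : List (Fin n)) (i j : ℕ) : Prop :=
  i < j ∧ j ≤ L.length ∧ (∀ v ∈ seg L i j, isRepV L v) ∧
    (i = 0 ∨ ¬ ∀ v ∈ seg L (i - 1) j, isRepV L v) ∧
    (j = L.length ∨ ¬ ∀ v ∈ seg L i (j + 1), isRepV L v)

lemma evolve_eq {n : ℕ} (σ₀ : Fin n → ℝ) (M : List (Fin n)) (u : Fin n) :
    evolve σ₀ M u = (-1) ^ (M.count u) * σ₀ u := by
  induction M generalizing σ₀ with
  | nil => simp [evolve]
  | cons v M ih =>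
    rw [evolve, ih, List.count_cons]
    by_cases h : u = v
    · simp [flipSpin, h, pow_succ]
    · have h' : v ≠ u := fun hh => h hh.symm
      simp [flipSpin, h, h', pow_succ]

lemma mem_seg_iff {n : ℕ} {L : List (Fin n)} {a c : ℕ} {v : Fin n} :
    v ∈ seg L a c ↔ ∃ t : ℕ, ∃ h : t < L.length, a ≤ t ∧ t < c ∧ L[t] = v := by
  unfold seg
  constructor
  · intro hv
    obtain ⟨k, hk, hget⟩ := List.getElem_of_mem hv
    have hk' : a + k < min c L.length := by
      simp only [List.length_drop, List.length_take] at hk; omega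
    refine ⟨a + k, by omega, by omega, by omega, ?_⟩
    rw [← hget]
    simp [List.getElem_drop, List.getElem_take]
  · rintro ⟨t, h, hat, htc, rfl⟩
    have hlen : t - a < ((L.take c).drop a).length := by
      simp only [List.length_drop, List.length_take]; omega
    have heq : ((L.take c).drop a)[t-a]'hlen = L[t]'h := by
      rw [List.getElem_drop]
      have : a + (t - a) = t := by omega
      simp [List.getElem_take, this]
    exact heq ▸ List.getElem_mem hlen

lemma seg_forall {n : ℕ} {L : List (Fin n)} {a c : ℕ} :
    (∀ v ∈ seg L a c, isRepV L v) ↔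
      ∀ t (h : t < L.length), a ≤ t → t < c → 2 ≤ L.count (L[t]'h) := by
  constructor
  · intro H t h h1 h2; exact H _ (mem_seg_iff.2 ⟨t, h, h1, h2, rfl⟩)
  · rintro H v hv
    obtain ⟨t, h, h1, h2, rfl⟩ := mem_seg_iff.1 hv
    exact H t h h1 h2

lemma blocks_disjoint_aux {n : ℕ} {L : List (Fin n)} {i j i' j' : ℕ} (hii : i ≤ i')
    (hp : TransBlock L i j) (hq : TransBlock L i' j') (hne : (i,j) ≠ (i',j')) :
    j ≤ i' ∨ j' ≤ i := by
  by_contra hc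
  push_neg at hc
  obtain ⟨hij', hji'⟩ := hc
  obtain ⟨hij, hjlen, hall, hleft, hright⟩ := hp
  obtain ⟨hij2, hjlen2, hall2, hleft2, hright2⟩ := hq
  rw [seg_forall] at hall hall2
  have hcomb : ∀ t (h : t < L.length), i ≤ t → t < max j j' → 2 ≤ L.count (L[t]'h) := by
    intro t h h1 h2
    rcases lt_or_ge t j with h3 | h3
    · exact hall t h h1 h3
    · exact hall2 t h (by omega) (by omega)
  rcases lt_or_ge j j' with h4 | h4
  · rcases hright with h5 | h5
    · omega
    · exact h5 (seg_forall.2 fun t h h1 h2 => hcomb t h h1 (by omega))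
  · rcases lt_or_ge i i' with h6 | h6
    · rcases hleft2 with h5 | h5
      · omega
      · exact h5 (seg_forall.2 fun t h h1 h2 => hcomb t h (by omega) (by omega))
    · have hii' : i = i' := by omega
      have hjj' : j' < j := by
        rcases lt_or_ge j' j with h7 | h7
        · exact h7
        · exact absurd (by simp [hii']; omega : (i,j) = (i',j')) hne
      rcases hright2 with h5 | h5
      · omega
      · exact h5 (seg_forall.2 fun t h h1 h2 => hcomb t h (by omega) (by omega))

lemma blocks_disjoint {n : ℕ} {L : List (Fin n)} {i j i' j' : ℕ}
    (hp : TransBlock L i j) (hq : TransBlock L i' j') (hne : (i,j) ≠ (i',j')) :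
    j ≤ i' ∨ j' ≤ i := by
  rcases le_total i i' with h | h
  · exact blocks_disjoint_aux h hp hq hne
  · exact (blocks_disjoint_aux h hq hp (Ne.symm hne)).symm

lemma singleton_before_block {n : ℕ} {L : List (Fin n)} {i j : ℕ}
    (hp : TransBlock L i j) (hi : 0 < i) (h : i - 1 < L.length) :
    L.count (L[i-1]'h) = 1 := by
  obtain ⟨hij, hjlen, hall, hleft, hright⟩ := hp
  rcases hleft with h5 | h5
  · omega
  have h1 : L[i-1]'h ∈ L := List.getElem_mem h
  have h2 : ¬ 2 ≤ L.count (L[i-1]'h) := by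
    intro h2
    apply h5
    rw [seg_forall] at hall ⊢
    intro t ht ht1 ht2
    rcases lt_or_ge t i with h6 | h6
    · have ht' : t = i - 1 := by omega
      have : L[t]'ht = L[i-1]'h := by congr 1
      rw [this]; exact h2
    · exact hall t ht h6 ht2
  have h3 : 0 < L.count (L[i-1]'h) := List.count_pos_iff.2 h1
  omega

open Classical in
lemma block_exists {n : ℕ} {L : List (Fin n)} {t0 : ℕ} (h0 : t0 < L.length)
    (hrep : 2 ≤ L.count (L[t0]'h0)) :
    ∃ i j, TransBlock L i j ∧ i ≤ t0 ∧ t0 < j := by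
  have hP : ∃ k, ∀ s, k ≤ s → s ≤ t0 → ∃ h : s < L.length, 2 ≤ L.count (L[s]'h) := by
    refine ⟨t0, fun s h1 h2 => ?_⟩
    have : s = t0 := by omega
    subst this; exact ⟨h0, hrep⟩
  set i := Nat.find hP with hidef
  have hPi := Nat.find_spec hP
  have hQ : ∃ k, t0 < k ∧ (L.length ≤ k ∨ ¬ ∃ h : k < L.length, 2 ≤ L.count (L[k]'h)) :=
    ⟨L.length, h0, Or.inl le_rfl⟩
  set j := Nat.find hQ with hjdef
  obtain ⟨hjt0, hjspec⟩ := Nat.find_spec hQ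
  have hjle : j ≤ L.length := Nat.find_le ⟨h0, Or.inl le_rfl⟩
  have hgoodmid : ∀ s, t0 < s → s < j → ∃ h : s < L.length, 2 ≤ L.count (L[s]'h) := by
    intro s h1 h2
    by_contra hg
    have : j ≤ s := Nat.find_le (show t0 < s ∧
      (L.length ≤ s ∨ ¬ ∃ h : s < L.length, 2 ≤ L.count (L[s]'h)) from ⟨h1, Or.inr hg⟩)
    omega
  have hit0 : i ≤ t0 := Nat.find_le (by
    intro s h1 h2
    have : s = t0 := by omega
    subst this; exact ⟨h0, hrep⟩)
  have hallgood : ∀ t (h : t < L.length), i ≤ t → t < j → 2 ≤ L.count (L[t]'h) := by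
    intro t h h1 h2
    rcases le_or_gt t t0 with h3 | h3
    · exact (hPi t h1 h3).2
    · exact (hgoodmid t h3 h2).2
  refine ⟨i, j, ⟨by omega, hjle, seg_forall.2 hallgood, ?_, ?_⟩, hit0, hjt0⟩
  · rcases Nat.eq_zero_or_pos i with h1 | h1
    · exact Or.inl h1
    right
    have hnP := Nat.find_min hP (m := i - 1) (by omega)
    intro hallrep
    apply hnP
    intro s h1' h2'
    rcases eq_or_lt_of_le h1' with h3 | h3
    · have hs : s < L.length := by omega
      exact ⟨hs, hallrep _ (mem_seg_iff.2 ⟨s, hs, by omega, by omega, rfl⟩)⟩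
    · exact hPi s (by omega) h2'
  · rcases le_or_gt L.length j with h1 | h1
    · exact Or.inl (by omega)
    right
    intro hallrep
    rcases hjspec with h2 | h2
    · omega
    · exact h2 ⟨h1, hallrep _ (mem_seg_iff.2 ⟨j, h1, by omega, by omega, rfl⟩)⟩

lemma count_take_of_not_mem {n : ℕ} {L : List (Fin n)} {w : Fin n} (hw : w ∉ L) (t : ℕ) :
    (L.take t).count w = 0 :=
  List.count_eq_zero.2 fun h => hw ((L.take_sublist t).subset h)

lemma count_take_singleton {n : ℕ} {L : List (Fin n)} {q : ℕ} (hq : q < L.length)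
    (h1 : L.count (L[q]'hq) = 1) (t : ℕ) :
    (L.take t).count (L[q]'hq) = if q < t then 1 else 0 := by
  have hsplit : (L.take t).count (L[q]'hq) + (L.drop t).count (L[q]'hq) = 1 := by
    rw [← List.count_append, List.take_append_drop]; exact h1
  split_ifs with h
  · have hmem : L[q]'hq ∈ L.take t := by
      have hlt : q < (L.take t).length := by simp [List.length_take]; omega
      have : (L.take t)[q]'hlt = L[q]'hq := by simp [List.getElem_take]
      exact this ▸ List.getElem_mem hlt
    have := List.count_pos_iff.2 hmem
    omega
  · have hlt : q - t < (L.drop t).length := by simp [List.length_drop]; omega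
    have hmem : L[q]'hq ∈ L.drop t := by
      have : (L.drop t)[q-t]'hlt = L[q]'hq := by
        rw [List.getElem_drop]
        congr 1; omega
      exact this ▸ List.getElem_mem hlt
    have := List.count_pos_iff.2 hmem
    omega

lemma firstOcc_lt_length {n : ℕ} {L : List (Fin n)} {i j : ℕ} {v : Fin n}
    (hv : v ∈ seg L i j) : i + (seg L i j).idxOf v < L.length := by
  have hk := List.idxOf_lt_length_iff.2 hv
  have hlen : (seg L i j).length = min j L.length - i := by simp [seg]
  omega

lemma firstOcc_lt {n : ℕ} {L : List (Fin n)} {i j : ℕ} {v : Fin n}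
    (hv : v ∈ seg L i j) : i + (seg L i j).idxOf v < j := by
  have hk := List.idxOf_lt_length_iff.2 hv
  have hlen : (seg L i j).length = min j L.length - i := by simp [seg]
  omega

lemma firstOcc_get {n : ℕ} {L : List (Fin n)} {i j : ℕ} {v : Fin n}
    (hv : v ∈ seg L i j) (h : i + (seg L i j).idxOf v < L.length) :
    L[i + (seg L i j).idxOf v]'h = v := by
  have hk := List.idxOf_lt_length_iff.2 hv
  have hget := List.getElem_idxOf hk
  have heq : (seg L i j)[(seg L i j).idxOf v]'hk = L[i + (seg L i j).idxOf v]'h := by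
    simp only [seg, List.getElem_drop, List.getElem_take]
  rw [← heq, hget]

lemma entry_eq {n : ℕ} (σ₀ : Fin n → ℝ) (L : List (Fin n)) {v u : Fin n} (hvu : v ≠ u)
    (t : Fin L.length) :
    moveMatrix σ₀ L (v, u) t =
      (if L.get t = v then
        evolve σ₀ (L.take t.1) (L.get t) * evolve σ₀ (L.take t.1) u else 0)
      + (if L.get t = u then
        evolve σ₀ (L.take t.1) (L.get t) * evolve σ₀ (L.take t.1) v else 0) := by
  simp only [moveMatrix]
  by_cases h1 : v = L.get t <;> by_cases h2 : u = L.get t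
  · exact absurd (h1.trans h2.symm) hvu
  · rw [if_pos ⟨h1, h2⟩, if_pos h1.symm, if_neg (fun hh => h2 hh.symm)]; ring
  · rw [if_neg (by tauto), if_pos ⟨h2, h1⟩, if_neg (fun hh => h1 hh.symm), if_pos h2.symm]; ring
  · rw [if_neg (by tauto), if_neg (by tauto), if_neg (fun hh => h1 hh.symm),
      if_neg (fun hh => h2 hh.symm)]; ring

open Classical in
theorem ident_half {n : ℕ} (L : List (Fin n)) (TB : Finset (ℕ × ℕ))
    (hTBmem : ∀ p : ℕ × ℕ, p ∈ TB ↔ TransBlock L p.1 p.2)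
    (b : Fin n → ℕ)
    (hb : ∀ v, b v = (TB.filter fun p => v ∈ seg L p.1 p.2).card) :
    sSing L + ∑ p ∈ TB, sDist (seg L p.1 p.2) =
      sDist L + ∑ v ∈ L.toFinset, (b v - 1) := by
  classical
  have hseg_toFinset : ∀ p : ℕ × ℕ,
      (seg L p.1 p.2).toFinset = L.toFinset.filter (fun v => v ∈ seg L p.1 p.2) := by
    intro p
    ext v
    simp only [List.mem_toFinset, Finset.mem_filter]
    constructor
    · intro hv
      exact ⟨List.mem_of_mem_take (List.mem_of_mem_drop hv), hv⟩
    · exact fun hv => hv.2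
  have hswap : ∑ p ∈ TB, sDist (seg L p.1 p.2) = ∑ v ∈ L.toFinset, b v := by
    have h1 : ∀ p ∈ TB, sDist (seg L p.1 p.2)
        = ∑ v ∈ L.toFinset, if v ∈ seg L p.1 p.2 then 1 else 0 := by
      intro p _
      rw [show sDist (seg L p.1 p.2) = ((seg L p.1 p.2).toFinset).card from rfl,
        hseg_toFinset p, Finset.card_filter]
    rw [Finset.sum_congr rfl h1, Finset.sum_comm]
    apply Finset.sum_congr rfl
    intro v _
    rw [hb v, Finset.card_filter]
  set P : Fin n → Prop := fun v => L.count v = 1 with hP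
  have hpart : (L.toFinset.filter P).card + (L.toFinset.filter (fun v => ¬ P v)).card
      = L.toFinset.card := Finset.card_filter_add_card_filter_not _
  have hb0 : ∀ v ∈ L.toFinset.filter P, b v = 0 := by
    intro v hv
    obtain ⟨hvL, hvP⟩ := Finset.mem_filter.1 hv
    rw [hb, Finset.card_eq_zero, Finset.filter_eq_empty_iff]
    intro p hp hvp
    have hrep : isRepV L v := ((hTBmem p).1 hp).2.2.1 v hvp
    rw [hP] at hvP
    exact absurd hvP (by rw [isRepV] at hrep; omega)
  have hb1 : ∀ v ∈ L.toFinset.filter (fun v => ¬ P v), 1 ≤ b v := by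
    intro v hv
    obtain ⟨hvL, hvP⟩ := Finset.mem_filter.1 hv
    have hvL' := List.mem_toFinset.1 hvL
    have hcount : 2 ≤ L.count v := by
      have := List.count_pos_iff.2 hvL'
      simp only [hP] at hvP
      omega
    obtain ⟨t0, h0, hget⟩ := List.getElem_of_mem hvL'
    obtain ⟨i, j, hblk, hit, htj⟩ := block_exists h0 (by rw [hget]; exact hcount)
    rw [hb, Nat.one_le_iff_ne_zero, Ne, Finset.card_eq_zero]
    intro hemp
    have hmem : (i, j) ∈ TB.filter (fun p => v ∈ seg L p.1 p.2) :=
      Finset.mem_filter.2 ⟨(hTBmem (i,j)).2 hblk, mem_seg_iff.2 ⟨t0, h0, hit, htj, hget⟩⟩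
    rw [hemp] at hmem
    simp at hmem
  have hsplit1 : ∑ v ∈ L.toFinset.filter P, b v
      + ∑ v ∈ L.toFinset.filter (fun v => ¬ P v), b v = ∑ v ∈ L.toFinset, b v :=
    Finset.sum_filter_add_sum_filter_not _ _ _
  have hsplit2 : ∑ v ∈ L.toFinset.filter P, (b v - 1)
      + ∑ v ∈ L.toFinset.filter (fun v => ¬ P v), (b v - 1)
      = ∑ v ∈ L.toFinset, (b v - 1) :=
    Finset.sum_filter_add_sum_filter_not _ _ _
  have hz1 : ∑ v ∈ L.toFinset.filter P, b v = 0 := Finset.sum_eq_zero hb0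
  have hz2 : ∑ v ∈ L.toFinset.filter P, (b v - 1) = 0 :=
    Finset.sum_eq_zero (fun v hv => by simp [hb0 v hv])
  have hz3 : ∑ v ∈ L.toFinset.filter (fun v => ¬ P v), b v
      = ∑ v ∈ L.toFinset.filter (fun v => ¬ P v), (b v - 1)
        + (L.toFinset.filter (fun v => ¬ P v)).card := by
    rw [Finset.card_eq_sum_ones, ← Finset.sum_add_distrib]
    apply Finset.sum_congr rfl
    intro v hv
    have := hb1 v hv
    omega
  have hS : sSing L = (L.toFinset.filter P).card := rfl
  have hD : sDist L = L.toFinset.card := rfl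
  rw [hswap]
  omega

open Classical in
theorem rank_half {n : ℕ} (L : List (Fin n)) (σ₀ : Fin n → ℝ) (h : isSpin σ₀)
    (hs : sDist L < n) (TB : Finset (ℕ × ℕ))
    (hTBmem : ∀ p : ℕ × ℕ, p ∈ TB ↔ TransBlock L p.1 p.2) :
    sSing L + ∑ p ∈ TB, sDist (seg L p.1 p.2) ≤ (moveMatrix σ₀ L).rank := by
  classical
  have hσ0 : ∀ x, σ₀ x ≠ 0 := by
    intro x
    rcases h x with h1 | h1 <;> rw [h1] <;> norm_num
  have hevne : ∀ (M : List (Fin n)) (x : Fin n), evolve σ₀ M x ≠ 0 := by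
    intro M x
    rw [evolve_eq]
    exact mul_ne_zero (pow_ne_zero _ (by norm_num)) (hσ0 x)
  set A := moveMatrix σ₀ L with hA
  set SF : Finset (Fin n) := L.toFinset.filter (fun v => L.count v = 1) with hSF
  have hSFmem : ∀ v : Fin n, v ∈ SF → v ∈ L := fun v hv =>
    List.mem_toFinset.1 (Finset.mem_filter.1 hv).1
  let f : (↥SF ⊕ Σ p : ↥TB, ↥((seg L p.1.1 p.1.2).toFinset)) → Fin L.length :=
    Sum.elim (fun y => ⟨L.idxOf y.1, List.idxOf_lt_length_iff.2 (hSFmem y.1 y.2)⟩)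
      (fun x => ⟨x.1.1.1 + (seg L x.1.1.1 x.1.1.2).idxOf x.2.1,
        firstOcc_lt_length (List.mem_toFinset.1 x.2.2)⟩)
  have hvert_inl : ∀ y, L.get (f (Sum.inl y)) = y.1 := fun y => List.getElem_idxOf _
  have hvert_inr : ∀ x, L.get (f (Sum.inr x)) = x.2.1 := fun x =>
    firstOcc_get (List.mem_toFinset.1 x.2.2) _
  have hcount_inl : ∀ y : ↥SF, L.count y.1 = 1 := fun y => (Finset.mem_filter.1 y.2).2
  have hrep_inr : ∀ x : Σ p : ↥TB, ↥((seg L p.1.1 p.1.2).toFinset), 2 ≤ L.count x.2.1 := fun x =>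
    ((hTBmem x.1.1).1 x.1.2).2.2.1 x.2.1 (List.mem_toFinset.1 x.2.2)
  have hrange_inr : ∀ x : Σ p : ↥TB, ↥((seg L p.1.1 p.1.2).toFinset), x.1.1.1 ≤ (f (Sum.inr x)).1 ∧ (f (Sum.inr x)).1 < x.1.1.2 :=
    fun x => ⟨Nat.le_add_right _ _, firstOcc_lt (List.mem_toFinset.1 x.2.2)⟩
  have hgetmem : ∀ t : Fin L.length, L.get t ∈ L := fun t => List.get_mem L t
  have hli : LinearIndependent ℝ
      (fun i : (↥SF ⊕ Σ p : ↥TB, ↥((seg L p.1.1 p.1.2).toFinset)) => Aᵀ (f i)) := by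
    rw [Fintype.linearIndependent_iff]
    intro g hg
    set hh : (↥SF ⊕ Σ p : ↥TB, ↥((seg L p.1.1 p.1.2).toFinset)) → ℝ :=
      fun i => g i * evolve σ₀ (L.take (f i).1) (L.get (f i)) with hhdef
    have hrow : ∀ e : Fin n × Fin n, ∑ i, g i * A e (f i) = 0 := by
      intro e
      have h0 := congrFun hg e
      simpa [Finset.sum_apply, Matrix.transpose_apply] using h0
    obtain ⟨w, hw⟩ : ∃ w : Fin n, w ∉ L.toFinset := by
      by_contra hcon
      push_neg at hcon
      have huniv : L.toFinset = Finset.univ := Finset.eq_univ_iff_forall.2 hcon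
      rw [sDist, huniv, Finset.card_univ, Fintype.card_fin] at hs
      exact lt_irrefl _ hs
    have hwL : w ∉ L := fun hx => hw (List.mem_toFinset.2 hx)
    have hEqA : ∀ v : Fin n, ∑ i, (if L.get (f i) = v then hh i else 0) = 0 := by
      intro v
      by_cases hvw : v = w
      · apply Finset.sum_eq_zero
        intro i _
        apply if_neg
        intro hc
        exact hwL (hvw ▸ hc ▸ hgetmem (f i))
      have h0 := hrow (v, w)
      have hterm : ∀ i, g i * A (v, w) (f i)
          = σ₀ w * (if L.get (f i) = v then hh i else 0) := by
        intro i
        rw [hA, entry_eq σ₀ L hvw (f i)]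
        rw [if_neg (fun hc : L.get (f i) = w => hwL (hc ▸ hgetmem (f i)))]
        have hev : evolve σ₀ (L.take (f i).1) w = σ₀ w := by
          rw [evolve_eq, count_take_of_not_mem hwL]
          simp
        by_cases hc : L.get (f i) = v
        · rw [if_pos hc, if_pos hc, hev]
          simp only [hhdef]
          ring
        · rw [if_neg hc, if_neg hc]
          ring
      rw [Finset.sum_congr rfl (fun i _ => hterm i), ← Finset.mul_sum] at h0
      exact (mul_eq_zero.1 h0).resolve_left (hσ0 w)
    have hsz : ∀ y : ↥SF, g (Sum.inl y) = 0 := by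
      intro y
      have h0 := hEqA y.1
      rw [Finset.sum_eq_single (Sum.inl y)] at h0
      · rw [if_pos (hvert_inl y)] at h0
        simp only [hhdef] at h0
        exact (mul_eq_zero.1 h0).resolve_right (hevne _ _)
      · intro i _ hne
        apply if_neg
        intro hveq
        cases i with
        | inl z =>
          exact hne (congrArg Sum.inl (Subtype.ext ((hvert_inl z).symm.trans hveq)))
        | inr x =>
          have h2 := hrep_inr x
          have h3 := hcount_inl y
          rw [hvert_inr x] at hveq
          rw [hveq] at h2
          omega
      · intro hni
        exact absurd (Finset.mem_univ _) hni
    have hEqS : ∀ (v : Fin n) (q : Fin L.length), L.count (L.get q) = 1 → L.get q ≠ v →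
        ∑ i, (if L.get (f i) = v ∧ q.1 < (f i).1 then hh i else 0) = 0 := by
      intro v q hq1 hqv
      have h0 := hrow (v, L.get q)
      have hterm : ∀ i, g i * A (v, L.get q) (f i)
          = σ₀ (L.get q) * (if L.get (f i) = v then
              (if q.1 < (f i).1 then -(hh i) else hh i) else 0)
            + (if L.get (f i) = L.get q then
              g i * (evolve σ₀ (L.take (f i).1) (L.get (f i))
                * evolve σ₀ (L.take (f i).1) v) else 0) := by
        intro i
        rw [hA, entry_eq σ₀ L (fun hc => hqv hc.symm) (f i)]
        have hev : evolve σ₀ (L.take (f i).1) (L.get q)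
            = if q.1 < (f i).1 then -(σ₀ (L.get q)) else σ₀ (L.get q) := by
          rw [evolve_eq]
          have hc := count_take_singleton q.2 hq1 ((f i).1)
          simp only [List.get_eq_getElem]
          split_ifs at hc ⊢ with hlt
          · rw [hc]
            ring
          · rw [hc]
            ring
        rw [hev]
        by_cases hc : L.get (f i) = v
        · have hcu : ¬ (L.get (f i) = L.get q) := fun hx => hqv (by rw [← hx, hc])
          rw [if_pos hc, if_pos hc, if_neg hcu, if_neg hcu]
          simp only [hhdef]
          split_ifs with hlt <;> ring
        · rw [if_neg hc, if_neg hc]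
          split_ifs <;> ring
      have hT : ∀ i, (if L.get (f i) = L.get q then
          g i * (evolve σ₀ (L.take (f i).1) (L.get (f i))
            * evolve σ₀ (L.take (f i).1) v) else 0) = 0 := by
        intro i
        split_ifs with hc
        · cases i with
          | inl z =>
            rw [hsz z]
            ring
          | inr x =>
            exfalso
            have h2 := hrep_inr x
            rw [hvert_inr x] at hc
            rw [hc] at h2
            omega
        · rfl
      rw [Finset.sum_congr rfl (fun i _ => hterm i), Finset.sum_add_distrib,
        Finset.sum_congr rfl (fun i _ => hT i), Finset.sum_const_zero, add_zero,
        ← Finset.mul_sum] at h0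
      have hEqB := (mul_eq_zero.1 h0).resolve_left (hσ0 _)
      have hcomb : ∀ i, (if L.get (f i) = v ∧ q.1 < (f i).1 then hh i else 0)
          = ((if L.get (f i) = v then hh i else 0)
            - (if L.get (f i) = v then (if q.1 < (f i).1 then -(hh i) else hh i) else 0)) / 2 := by
        intro i
        by_cases h1 : L.get (f i) = v
        · by_cases h2 : q.1 < (f i).1
          · rw [if_pos ⟨h1, h2⟩, if_pos h1, if_pos h1, if_pos h2]
            ring
          · rw [if_neg (fun hc => h2 hc.2), if_pos h1, if_pos h1, if_neg h2]
            ring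
        · rw [if_neg (fun hc => h1 hc.1), if_neg h1, if_neg h1]
          ring
      rw [Finset.sum_congr rfl (fun i _ => hcomb i), ← Finset.sum_div,
        Finset.sum_sub_distrib, hEqA v, hEqB]
      norm_num
    have hQ : ∀ pB ∈ TB, ∀ v ∈ seg L pB.1 pB.2,
        ∑ i, (if L.get (f i) = v ∧ pB.1 ≤ (f i).1 then hh i else 0) = 0 := by
      intro pB hpB v hv
      have hblk := (hTBmem pB).1 hpB
      have hvrep : 2 ≤ L.count v := hblk.2.2.1 v hv
      rcases Nat.eq_zero_or_pos pB.1 with h1 | h1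
      · refine Eq.trans (Finset.sum_congr rfl ?_) (hEqA v)
        intro i _
        apply if_congr _ rfl rfl
        constructor
        · exact fun hc => hc.1
        · exact fun hc => ⟨hc, by omega⟩
      · have hqlt : pB.1 - 1 < L.length := by
          have := hblk.1
          have := hblk.2.1
          omega
        have hsing := singleton_before_block hblk h1 hqlt
        have hne : L.get (⟨pB.1-1, hqlt⟩ : Fin L.length) ≠ v := by
          intro he
          have hxx : L.count v = 1 := by rw [← he]; exact hsing
          omega
        have h0 := hEqS v ⟨pB.1-1, hqlt⟩ hsing hne
        refine Eq.trans (Finset.sum_congr rfl ?_) h0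
        intro i _
        apply if_congr _ rfl rfl
        constructor
        · rintro ⟨hc1, hc2⟩
          refine ⟨hc1, ?_⟩
          show pB.1 - 1 < (f i).1
          omega
        · rintro ⟨hc1, hc2⟩
          have hc2' : pB.1 - 1 < (f i).1 := hc2
          exact ⟨hc1, by omega⟩
    have hcase : ∀ (i : (↥SF ⊕ Σ p : ↥TB, ↥((seg L p.1.1 p.1.2).toFinset))) (v : Fin n),
        2 ≤ L.count v → L.get (f i) = v →
        ∃ pB ∈ TB, v ∈ seg L pB.1 pB.2 ∧ pB.1 ≤ (f i).1 ∧ (f i).1 < pB.2 := by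
      intro i v hrep hvi
      cases i with
      | inl z =>
        exfalso
        have h1 := hcount_inl z
        rw [hvert_inl z] at hvi
        rw [hvi] at h1
        omega
      | inr x =>
        refine ⟨x.1.1, x.1.2, ?_, (hrange_inr x).1, (hrange_inr x).2⟩
        rw [← hvi, hvert_inr x]
        exact List.mem_toFinset.1 x.2.2
    have hinrz : ∀ x : Σ p : ↥TB, ↥((seg L p.1.1 p.1.2).toFinset), g (Sum.inr x) = 0 := by
      rintro ⟨⟨pB, hpB⟩, v, hvT⟩
      have hv : v ∈ seg L pB.1 pB.2 := List.mem_toFinset.1 hvT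
      have hblk := (hTBmem pB).1 hpB
      have hvrep : 2 ≤ L.count v := hblk.2.2.1 v hv
      have hlt12 : pB.1 < pB.2 := hblk.1
      have hle2 : pB.2 ≤ L.length := hblk.2.1
      have hS1 := hQ pB hpB v hv
      have hS2 : ∑ i, (if L.get (f i) = v ∧ pB.2 ≤ (f i).1 then hh i else 0) = 0 := by
        set s := Finset.univ.filter
          (fun i => L.get (f i) = v ∧ pB.2 ≤ (f i).1) with hsdef
        rcases Finset.eq_empty_or_nonempty s with hse | hse
        · apply Finset.sum_eq_zero
          intro i _
          apply if_neg
          intro hc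
          have : i ∈ s := Finset.mem_filter.2 ⟨Finset.mem_univ _, hc⟩
          rw [hse] at this
          simp at this
        · obtain ⟨i1, hi1mem, hi1min⟩ := Finset.exists_min_image s (fun i => (f i).1) hse
          obtain ⟨hc1, hc2⟩ := (Finset.mem_filter.1 hi1mem).2
          obtain ⟨pB', hpB', hv', hr1, hr2⟩ := hcase i1 v hvrep hc1
          have hkey : ∀ i, L.get (f i) = v → (pB.2 ≤ (f i).1 ↔ pB'.1 ≤ (f i).1) := by
            intro i hvi
            obtain ⟨pBi, hpBi, hvi', hri1, hri2⟩ := hcase i v hvrep hvi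
            constructor
            · intro hge
              have hmin := hi1min i (Finset.mem_filter.2 ⟨Finset.mem_univ _, hvi, hge⟩)
              omega
            · intro hge
              have hne' : pB' ≠ pB := by
                intro he
                rw [he] at hr1 hr2
                omega
              have hd1 : pB.2 ≤ pB'.1 := by
                rcases blocks_disjoint ((hTBmem pB').1 hpB') hblk
                  (by simpa using hne') with hd | hd
                · omega
                · exact hd
              by_cases heq : pBi = pB'
              · rw [heq] at hri1
                omega
              · rcases blocks_disjoint ((hTBmem pBi).1 hpBi) ((hTBmem pB').1 hpB')
                  (by simpa using heq) with hd | hd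
                · omega
                · omega
          refine Eq.trans (Finset.sum_congr rfl ?_) (hQ pB' hpB' v hv')
          intro i _
          by_cases hvi : L.get (f i) = v
          · apply if_congr _ rfl rfl
            exact ⟨fun hc => ⟨hc.1, (hkey i hc.1).1 hc.2⟩, fun hc => ⟨hc.1, (hkey i hc.1).2 hc.2⟩⟩
          · rw [if_neg (fun hc => hvi hc.1), if_neg (fun hc => hvi hc.1)]
      have hpt : ∀ i, (if L.get (f i) = v ∧ pB.1 ≤ (f i).1 then hh i else 0)
          - (if L.get (f i) = v ∧ pB.2 ≤ (f i).1 then hh i else 0)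
          = (if L.get (f i) = v ∧ pB.1 ≤ (f i).1 ∧ (f i).1 < pB.2 then hh i else 0) := by
        intro i
        have hlt : pB.1 < pB.2 := hblk.1
        by_cases h1 : L.get (f i) = v
        · by_cases h3 : pB.2 ≤ (f i).1
          · rw [if_pos ⟨h1, by omega⟩, if_pos ⟨h1, h3⟩, if_neg (by rintro ⟨-, -, hx⟩; omega)]
            ring
          · by_cases h2 : pB.1 ≤ (f i).1
            · rw [if_pos ⟨h1, h2⟩, if_neg (by rintro ⟨-, hx⟩; omega),
                if_pos ⟨h1, h2, by omega⟩]
              ring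
            · rw [if_neg (by rintro ⟨-, hx⟩; omega), if_neg (by rintro ⟨-, hx⟩; omega),
                if_neg (by rintro ⟨-, hx, -⟩; omega)]
              ring
        · rw [if_neg (fun hc => h1 hc.1), if_neg (fun hc => h1 hc.1),
            if_neg (fun hc => h1 hc.1)]
          ring
      have hsingle : ∑ i, (if L.get (f i) = v ∧ pB.1 ≤ (f i).1 ∧ (f i).1 < pB.2
          then hh i else 0) = hh (Sum.inr ⟨⟨pB, hpB⟩, v, hvT⟩) := by
        rw [Finset.sum_eq_single (Sum.inr ⟨⟨pB, hpB⟩, v, hvT⟩)]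
        · rw [if_pos ⟨hvert_inr ⟨⟨pB, hpB⟩, v, hvT⟩, (hrange_inr ⟨⟨pB, hpB⟩, v, hvT⟩).1,
            (hrange_inr ⟨⟨pB, hpB⟩, v, hvT⟩).2⟩]
        · intro i _ hne
          apply if_neg
          rintro ⟨hc1, hc2, hc3⟩
          cases i with
          | inl z =>
            have h1 := hcount_inl z
            rw [hvert_inl z] at hc1
            rw [hc1] at h1
            omega
          | inr x' =>
            obtain ⟨⟨p1, hp1⟩, v1, hv1⟩ := x'
            have hveq : v1 = v := (hvert_inr ⟨⟨p1, hp1⟩, v1, hv1⟩).symm.trans hc1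
            have hr1 := (hrange_inr ⟨⟨p1, hp1⟩, v1, hv1⟩).1
            have hr2 := (hrange_inr ⟨⟨p1, hp1⟩, v1, hv1⟩).2
            have hBeq : p1 = pB := by
              by_contra hne2
              rcases blocks_disjoint ((hTBmem p1).1 hp1) hblk
                (by simpa using hne2) with hd | hd
              · simp only at hr1 hr2
                omega
              · simp only at hr1 hr2
                omega
            apply hne
            subst hBeq
            subst hveq
            rfl
        · intro hni
          exact absurd (Finset.mem_univ _) hni
      have hfin : hh (Sum.inr ⟨⟨pB, hpB⟩, v, hvT⟩) = 0 := by
        rw [← hsingle]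
        refine Eq.trans (Finset.sum_congr rfl (fun i _ => (hpt i).symm)) ?_
        rw [Finset.sum_sub_distrib, hS1, hS2]
        ring
      rw [hhdef] at hfin
      exact (mul_eq_zero.1 hfin).resolve_right (hevne _ _)
    intro i
    cases i with
    | inl y => exact hsz y
    | inr x => exact hinrz x
  have hcard : Fintype.card (↥SF ⊕ Σ p : ↥TB, ↥((seg L p.1.1 p.1.2).toFinset))
      = sSing L + ∑ p ∈ TB, sDist (seg L p.1 p.2) := by
    rw [Fintype.card_sum, Fintype.card_sigma]
    congr 1
    · exact Fintype.card_coe _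
    · calc ∑ p : ↥TB, Fintype.card ↥((seg L p.1.1 p.1.2).toFinset)
          = ∑ p : ↥TB, sDist (seg L (p.1).1 (p.1).2) := by
            apply Finset.sum_congr rfl
            intro p _
            exact Fintype.card_coe _
        _ = ∑ p ∈ TB, sDist (seg L p.1 p.2) :=
            Finset.sum_coe_sort TB (fun p => sDist (seg L p.1 p.2))
  calc sSing L + ∑ p ∈ TB, sDist (seg L p.1 p.2)
      = Fintype.card (↥SF ⊕ Σ p : ↥TB, ↥((seg L p.1.1 p.1.2).toFinset)) := hcard.symm
    _ = Module.finrank ℝ (Submodule.span ℝ (Set.range (fun i => Aᵀ (f i)))) :=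
        (finrank_span_eq_card hli).symm
    _ ≤ Module.finrank ℝ (Submodule.span ℝ (Set.range Aᵀ)) :=
        Submodule.finrank_mono (Submodule.span_mono (Set.range_comp_subset_range f Aᵀ))
    _ = A.rank := (Matrix.rank_eq_finrank_span_cols A).symm

open Classical in
/-- Lemma 3.1(iii): if `s(L) < n` and `L` does not revisit any state, then
`rank(A_L) ≥ s₁(L) + ∑_i s(T_i) = s(L) + ∑_v (b(v) - 1)⁺`, where the `T_i` are the
transition blocks of `L` and `b(v)` is the number of transition blocks containing `v`. -/
theorem stmt5 (n : ℕ) (L : List (Fin n)) (σ₀ : Fin n → ℝ) (h : isSpin σ₀)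
    (hs : sDist L < n) (hnr : noRevisit L)
    (TB : Finset (ℕ × ℕ))
    (hTB : TB = (Finset.range (L.length + 1) ×ˢ Finset.range (L.length + 1)).filter
      fun p => TransBlock L p.1 p.2)
    (b : Fin n → ℕ)
    (hb : ∀ v, b v = (TB.filter fun p => v ∈ seg L p.1 p.2).card) :
    sSing L + ∑ p ∈ TB, sDist (seg L p.1 p.2) ≤ (moveMatrix σ₀ L).rank ∧
    sSing L + ∑ p ∈ TB, sDist (seg L p.1 p.2) =
      sDist L + ∑ v ∈ L.toFinset, (b v - 1) := by
  have hTBmem : ∀ p : ℕ × ℕ, p ∈ TB ↔ TransBlock L p.1 p.2 := by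
    intro p
    rw [hTB, Finset.mem_filter, Finset.mem_product, Finset.mem_range, Finset.mem_range]
    constructor
    · exact fun hx => hx.2
    · intro hx
      have h1 := hx.1
      have h2 := hx.2.1
      exact ⟨⟨by omega, by omega⟩, hx⟩
  exact ⟨rank_half L σ₀ h hs TB hTBmem, ident_half L TB hTBmem b hb⟩
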